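/- For every multigraph G and every function f : V(G) → ℕ with f(v) ≥ 2 for all v, the list degree-f pseudoarboricity equals the degree-f pseudoarboricity: pa_{f,ℓ}(G) = pa_f(G). -/

import Mathlib

open Classical

noncomputable section

namespace MG

variable {V : Type} {E : Type} [Fintype V] [Fintype E] [DecidableEq V]

/-- The number of times vertex `v` occurs as an endpoint of the unordered pair `s`
(so a loop at `v` counts twice). -/
def mult (v : V) (s : Sym2 V) : ℕ :=
  Sym2.lift ⟨fun a b => (if a = v then 1 else 0) + (if b = v then 1 else 0),
    fun _ _ => add_comm _ _⟩ s

/-- The degree of a vertex in the multigraph whose edges `E` have endpoints given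
by `ends` (loops count twice). -/
def degree (ends : E → Sym2 V) (v : V) : ℕ := ∑ e : E, mult v (ends e)

/-- Maximum degree `Δ(G)`. -/
def maxDegree (ends : E → Sym2 V) : ℕ := Finset.univ.sup fun v => degree ends v

/-- `e(S)`: the number of edges with all endpoints in `S`. -/
def edgesWithin (ends : E → Sym2 V) (S : Finset V) : ℕ :=
  (Finset.univ.filter fun e => ∀ v ∈ ends e, v ∈ S).card

/-- The degree of `v` in the subgraph induced by `S`. -/
def degreeIn (ends : E → Sym2 V) (S : Finset V) (v : V) : ℕ :=
  ∑ e ∈ Finset.univ.filter (fun e => ∀ u ∈ ends e, u ∈ S), mult v (ends e)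

/-- Adjacency; a vertex with a loop is adjacent to itself. -/
def Adj (ends : E → Sym2 V) (u v : V) : Prop := ∃ e, ends e = s(u, v)

/-- The multigraph has no loops. -/
def Loopless (ends : E → Sym2 V) : Prop := ∀ e, ¬ (ends e).IsDiag

/-- Reachability by walks. -/
def Reaches (ends : E → Sym2 V) (u v : V) : Prop :=
  Relation.ReflTransGen (Adj ends) u v

/-- The connected component of `v`, as a set of vertices. -/
def component (ends : E → Sym2 V) (v : V) : Finset V :=
  Finset.univ.filter fun u => Reaches ends v u

/-- A pseudoforest: every connected component contains at most one cycle
(a loop counts as a cycle); equivalently, every connected component has at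
most as many edges as vertices. -/
def IsPseudoforest (ends : E → Sym2 V) : Prop :=
  ∀ v : V, edgesWithin ends (component ends v) ≤ (component ends v).card

/-- A forest (acyclic multigraph): every connected component has strictly fewer
edges than vertices. -/
def IsForest (ends : E → Sym2 V) : Prop :=
  ∀ v : V, edgesWithin ends (component ends v) + 1 ≤ (component ends v).card

/-- An orientation assigns to each edge an ordered pair of its endpoints
(tail, head). -/
def IsOrientation (ends : E → Sym2 V) (D : E → V × V) : Prop :=
  ∀ e, Sym2.mk (D e).1 (D e).2 = ends e

/-- Indegree of `v` under the orientation `D`. -/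
def inDeg (D : E → V × V) (v : V) : ℕ := (Finset.univ.filter fun e => (D e).2 = v).card

/-- Outdegree of `v` under the orientation `D`. -/
def outDeg (D : E → V × V) (v : V) : ℕ := (Finset.univ.filter fun e => (D e).1 = v).card

/-- `G` is `(g,h)`-orientable: there is an orientation in which every vertex `v`
has indegree at most `g v` and outdegree at most `h v`. -/
def GHOrientable (ends : E → Sym2 V) (g h : V → ℕ∞) : Prop :=
  ∃ D : E → V × V, IsOrientation ends D ∧
    (∀ v, (inDeg D v : ℕ∞) ≤ g v) ∧ (∀ v, (outDeg D v : ℕ∞) ≤ h v)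

/-- `(g,h)` is a valid pair of functions for `G`. -/
def ValidPair (ends : E → Sym2 V) (g h : V → ℕ∞) : Prop :=
  (∀ v : V, 1 ≤ g v + h v) ∧
  (∀ u v : V, Adj ends u v → 1 ≤ g u + g v) ∧
  (∀ u v : V, Adj ends u v → 1 ≤ h u + h v)

/-- The endpoint map of the subgraph consisting of the edges satisfying `P`. -/
def subEnds (ends : E → Sym2 V) (P : E → Prop) : {e // P e} → Sym2 V :=
  fun e => ends e.val

/-- A `(g,h)`-oriented-coloring: each color class is a `(g,h)`-orientable subgraph. -/
def GHColoring (ends : E → Sym2 V) (g h : V → ℕ∞) {k : ℕ} (C : E → Fin k) : Prop :=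
  ∀ c : Fin k, GHOrientable (subEnds ends fun e => C e = c) g h

/-- The `(g,h)`-oriented chromatic index `χ'_{(g,h)}(G)`. -/
def ghChromaticIndex (ends : E → Sym2 V) (g h : V → ℕ∞) : ℕ :=
  sInf {k | ∃ C : E → Fin k, GHColoring ends g h C}

/-- Ceiling division `⌈a/b⌉` on ℕ. -/
def cdiv (a b : ℕ) : ℕ := (a + b - 1) / b

/-- Replace `∞` values of `g` by the maximum degree `Δ(G)`. -/
def trunc (ends : E → Sym2 V) (g : V → ℕ∞) (v : V) : ℕ :=
  WithTop.untopD (maxDegree ends) (g v)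

/-- The weighted maximum degree `Δ_{(g,h)}(G) = max_v ⌈d(v)/(g(v)+h(v))⌉`
(values `∞` of `g, h` replaced by `Δ(G)`). -/
def ghMaxDegree (ends : E → Sym2 V) (g h : V → ℕ∞) : ℕ :=
  Finset.univ.sup fun v => cdiv (degree ends v) (trunc ends g v + trunc ends h v)

/-- The weighted maximum density
`W_{(g,h)}(G) = max_{S, g(S) ≥ 1, h(S) ≥ 1} ⌈e(S)/min{g(S),h(S)}⌉`
(values `∞` of `g, h` replaced by `Δ(G)`). -/
def ghMaxDensity (ends : E → Sym2 V) (g h : V → ℕ∞) : ℕ :=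
  (Finset.univ.filter fun S : Finset V =>
      (1 ≤ ∑ v ∈ S, g v) ∧ (1 ≤ ∑ v ∈ S, h v)).sup
    fun S => cdiv (edgesWithin ends S)
      (min (∑ v ∈ S, trunc ends g v) (∑ v ∈ S, trunc ends h v))

/-- An edge-coloring into pseudoforests. -/
def PaColoring (ends : E → Sym2 V) {k : ℕ} (C : E → Fin k) : Prop :=
  ∀ c : Fin k, IsPseudoforest (subEnds ends fun e => C e = c)

/-- The pseudoarboricity `pa(G)`. -/
def pa (ends : E → Sym2 V) : ℕ := sInf {k | ∃ C : E → Fin k, PaColoring ends C}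

/-- An edge-coloring into degree-`f` pseudoforests. -/
def PafColoring (ends : E → Sym2 V) (f : V → ℕ) {k : ℕ} (C : E → Fin k) : Prop :=
  ∀ c : Fin k, IsPseudoforest (subEnds ends fun e => C e = c) ∧
    ∀ v, degree (subEnds ends fun e => C e = c) v ≤ f v

/-- The degree-`f` pseudoarboricity `pa_f(G)`. -/
def paf (ends : E → Sym2 V) (f : V → ℕ) : ℕ :=
  sInf {k | ∃ C : E → Fin k, PafColoring ends f C}

/-- The weighted maximum degree `Δ_f(G) = max_v ⌈d(v)/f(v)⌉`. -/
def fMaxDegree (ends : E → Sym2 V) (f : V → ℕ) : ℕ :=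
  Finset.univ.sup fun v => cdiv (degree ends v) (f v)

/-- An edge-coloring into degree-`f` forests. -/
def AfColoring (ends : E → Sym2 V) (f : V → ℕ) {k : ℕ} (C : E → Fin k) : Prop :=
  ∀ c : Fin k, IsForest (subEnds ends fun e => C e = c) ∧
    ∀ v, degree (subEnds ends fun e => C e = c) v ≤ f v

/-- The degree-`f` arboricity `a_f(G)`. -/
def af (ends : E → Sym2 V) (f : V → ℕ) : ℕ :=
  sInf {k | ∃ C : E → Fin k, AfColoring ends f C}

/-- The arboricity `a(G)`. -/
def arboricity (ends : E → Sym2 V) : ℕ :=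
  sInf {k | ∃ C : E → Fin k, ∀ c : Fin k, IsForest (subEnds ends fun e => C e = c)}

/-- The linear arboricity `la(G)`: color classes are linear forests, i.e.
degree-2 forests. -/
def la (ends : E → Sym2 V) : ℕ := af ends fun _ => 2

/-- `G` is `k`-degenerate: every (induced, nonempty) subgraph has a vertex of
degree at most `k`. -/
def Degenerate (ends : E → Sym2 V) (k : ℕ) : Prop :=
  ∀ S : Finset V, S.Nonempty → ∃ v ∈ S, degreeIn ends S v ≤ k

/-- An `f`-coloring: in each color class every vertex `v` has degree at most `f v`. -/
def FColoring (ends : E → Sym2 V) (f : V → ℕ) {k : ℕ} (C : E → Fin k) : Prop :=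
  ∀ c : Fin k, ∀ v, degree (subEnds ends fun e => C e = c) v ≤ f v

/-- The `f`-chromatic index `χ'_f(G)`. -/
def fChromaticIndex (ends : E → Sym2 V) (f : V → ℕ) : ℕ :=
  sInf {k | ∃ C : E → Fin k, FColoring ends f C}

/-- `G` is bipartite: the vertices can be split into two sides so that every
edge has one endpoint on each side. -/
def Bipartite (ends : E → Sym2 V) : Prop :=
  ∃ P : V → Prop, ∀ e : E, ∃ u v, ends e = s(u, v) ∧ P u ∧ ¬ P v

/-- The list analogue `χ'_{(g,h),ℓ}(G)`: the least `k` such that every list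
assignment with lists of size at least `k` admits a coloring from the lists in
which each color class is `(g,h)`-orientable. -/
def ghListChromaticIndex (ends : E → Sym2 V) (g h : V → ℕ∞) : ℕ :=
  sInf {k | ∀ L : E → Finset ℕ, (∀ e, k ≤ (L e).card) →
    ∃ C : E → ℕ, (∀ e, C e ∈ L e) ∧
      ∀ c : ℕ, GHOrientable (subEnds ends fun e => C e = c) g h}

/-- The list degree-`f` pseudoarboricity `pa_{f,ℓ}(G)`. -/
def pafList (ends : E → Sym2 V) (f : V → ℕ) : ℕ :=
  sInf {k | ∀ L : E → Finset ℕ, (∀ e, k ≤ (L e).card) →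
    ∃ C : E → ℕ, (∀ e, C e ∈ L e) ∧
      ∀ c : ℕ, IsPseudoforest (subEnds ends fun e => C e = c) ∧
        ∀ v, degree (subEnds ends fun e => C e = c) v ≤ f v}

/-- The list `f`-chromatic index `χ'_{f,ℓ}(G)`. -/
def fListChromaticIndex (ends : E → Sym2 V) (f : V → ℕ) : ℕ :=
  sInf {k | ∀ L : E → Finset ℕ, (∀ e, k ≤ (L e).card) →
    ∃ C : E → ℕ, (∀ e, C e ∈ L e) ∧
      ∀ c : ℕ, ∀ v, degree (subEnds ends fun e => C e = c) v ≤ f v}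



set_option linter.unusedSectionVars false

section Helpers

variable {V E : Type} [Fintype V] [Fintype E] [DecidableEq V]

lemma mult_mk (v a b : V) :
    mult v s(a, b) = (if a = v then 1 else 0) + (if b = v then 1 else 0) := rfl

lemma sym2_exists {V : Type} (z : Sym2 V) : ∃ x y, z = s(x, y) := by
  induction z using Sym2.inductionOn with
  | hf x y => exact ⟨x, y, rfl⟩

lemma exists_tail_head (ends : E → Sym2 V) :
    ∃ t h : E → V, ∀ e, ends e = s(t e, h e) := by
  have h : ∀ e, ∃ p : V × V, ends e = s(p.1, p.2) := by
    intro e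
    obtain ⟨x, y, hxy⟩ := sym2_exists (ends e)
    exact ⟨(x, y), hxy⟩
  choose p hp using h
  exact ⟨fun e => (p e).1, fun e => (p e).2, hp⟩

/-- in-degree w.r.t. a head function -/
def inD (h : E → V) (v : V) : ℕ := (Finset.univ.filter fun e => h e = v).card

def outD (t : E → V) (v : V) : ℕ := (Finset.univ.filter fun e => t e = v).card

lemma degree_eq_out_add_in (ends : E → Sym2 V) (t h : E → V)
    (hth : ∀ e, ends e = s(t e, h e)) (v : V) :
    degree ends v = outD t v + inD h v := by
  unfold degree outD inD
  rw [Finset.card_filter, Finset.card_filter, ← Finset.sum_add_distrib]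
  refine Finset.sum_congr rfl fun e _ => ?_
  rw [hth e, mult_mk]

end Helpers
section Reach

variable {V E : Type} [Fintype V] [Fintype E] [DecidableEq V]

lemma adj_symm {ends : E → Sym2 V} {u v : V} (h : Adj ends u v) : Adj ends v u := by
  obtain ⟨e, he⟩ := h; exact ⟨e, by rw [he, Sym2.eq_swap]⟩

lemma reaches_symm {ends : E → Sym2 V} {u v : V} (h : Reaches ends u v) :
    Reaches ends v u := by
  unfold Reaches at h ⊢
  induction h with
  | refl => exact Relation.ReflTransGen.refl
  | tail _ hab ih => exact Relation.ReflTransGen.head (adj_symm hab) ih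

lemma mem_component {ends : E → Sym2 V} {u v : V} :
    u ∈ component ends v ↔ Reaches ends v u := by
  simp [component]

lemma self_mem_component {ends : E → Sym2 V} (v : V) : v ∈ component ends v :=
  mem_component.mpr Relation.ReflTransGen.refl

lemma component_eq_of_reaches {ends : E → Sym2 V} {u v : V}
    (h : Reaches ends u v) : component ends u = component ends v := by
  ext w
  simp only [mem_component]
  exact ⟨fun hw => (reaches_symm h).trans hw, fun hw => h.trans hw⟩

lemma adj_of_mem_ends {ends : E → Sym2 V} {e : E} {a b : V}
    (ha : a ∈ ends e) (hb : b ∈ ends e) : a = b ∨ Adj ends a b := by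
  obtain ⟨x, y, hxy⟩ := sym2_exists (ends e)
  rw [hxy, Sym2.mem_iff] at ha hb
  rcases ha with rfl | rfl <;> rcases hb with rfl | rfl
  · exact Or.inl rfl
  · exact Or.inr ⟨e, hxy⟩
  · exact Or.inr ⟨e, hxy.trans (Sym2.eq_swap)⟩
  · exact Or.inl rfl

lemma mem_component_of_mem_ends {ends : E → Sym2 V} {e : E} {a b v : V}
    (ha : a ∈ ends e) (hb : b ∈ ends e) (hc : a ∈ component ends v) :
    b ∈ component ends v := by
  rcases adj_of_mem_ends ha hb with rfl | hadj
  · exact hc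
  · exact mem_component.mpr ((mem_component.mp hc).tail hadj)

/-- iterated neighborhoods of a vertex set -/
def nbhd (ends : E → Sym2 V) (S : Finset V) : ℕ → Finset V
  | 0 => S
  | (i+1) => Finset.univ.filter fun v =>
      v ∈ nbhd ends S i ∨ ∃ x ∈ nbhd ends S i, Adj ends x v

lemma nbhd_mono_succ (ends : E → Sym2 V) (S : Finset V) (i : ℕ) :
    nbhd ends S i ⊆ nbhd ends S (i+1) := by
  intro v hv
  simp only [nbhd, Finset.mem_filter]
  exact ⟨Finset.mem_univ v, Or.inl hv⟩

lemma nbhd_mono (ends : E → Sym2 V) (S : Finset V) {i j : ℕ} (hij : i ≤ j) :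
    nbhd ends S i ⊆ nbhd ends S j := by
  induction hij with
  | refl => exact subset_rfl
  | step _ ih => exact fun v hv => nbhd_mono_succ _ _ _ (by exact ih hv)

lemma mem_nbhd_of_reaches {ends : E → Sym2 V} {S : Finset V} {s w : V}
    (hs : s ∈ S) (h : Reaches ends s w) : ∃ i, w ∈ nbhd ends S i := by
  induction h with
  | refl => exact ⟨0, hs⟩
  | tail _ hadj ih =>
      obtain ⟨i, hi⟩ := ih
      exact ⟨i + 1, by
        simp only [nbhd, Finset.mem_filter]
        exact ⟨Finset.mem_univ _, Or.inr ⟨_, hi, hadj⟩⟩⟩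

lemma nbhd_subset_component {ends : E → Sym2 V} {S : Finset V} {u₀ : V}
    (hS : ∀ x ∈ S, x ∈ component ends u₀) (i : ℕ) :
    ∀ x ∈ nbhd ends S i, x ∈ component ends u₀ := by
  induction i with
  | zero => exact hS
  | succ i ih =>
      intro x hx
      simp only [nbhd, Finset.mem_filter] at hx
      rcases hx.2 with hx' | ⟨y, hy, hadj⟩
      · exact ih x hx'
      · exact mem_component.mpr ((mem_component.mp (ih y hy)).tail hadj)

lemma edgesWithin_empty (ends : E → Sym2 V) : edgesWithin ends (∅ : Finset V) = 0 := by
  unfold edgesWithin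
  rw [Finset.card_eq_zero, Finset.filter_eq_empty_iff]
  intro e _
  obtain ⟨x, y, hxy⟩ := sym2_exists (ends e)
  intro hall
  have := hall (v := x) (by rw [hxy]; exact Sym2.mem_mk_left x y)
  exact absurd this (Finset.notMem_empty x)

lemma key_single {ends : E → Sym2 V} (hpf : IsPseudoforest ends)
    (S : Finset V) (u₀ : V) (hS : ∀ x ∈ S, x ∈ component ends u₀) :
    edgesWithin ends S ≤ S.card := by
  rcases S.eq_empty_or_nonempty with rfl | ⟨s₀, hs₀⟩
  · rw [edgesWithin_empty]; exact Nat.zero_le _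
  set C := component ends s₀ with hC
  have hcomp_eq : component ends u₀ = C :=
    component_eq_of_reaches (mem_component.mp (hS s₀ hs₀))
  have hSC : ∀ x ∈ S, x ∈ C := fun x hx => hcomp_eq ▸ hS x hx
  have hSsub : S ⊆ C := hSC
  have hnbC : ∀ i, ∀ x ∈ nbhd ends S i, x ∈ C :=
    fun i x hx => nbhd_subset_component hSC i x hx
  -- distance
  have hreach : ∀ w, w ∈ C → ∃ i, w ∈ nbhd ends S i := fun w hw =>
    mem_nbhd_of_reaches hs₀ (mem_component.mp hw)
  set T := C \ S with hT
  -- for each w in T choose an edge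
  have hedge : ∀ w : {w // w ∈ T}, ∃ e : E, ∃ x : V,
      ends e = s(x, (w : V)) ∧ x ∈ nbhd ends S (Nat.find (hreach w.1 (Finset.mem_sdiff.mp w.2).1) - 1) ∧
      (w : V) ∉ nbhd ends S (Nat.find (hreach w.1 (Finset.mem_sdiff.mp w.2).1) - 1) := by
    rintro ⟨w, hw⟩
    obtain ⟨hwC, hwS⟩ := Finset.mem_sdiff.mp hw
    set hex := hreach w hwC
    set d := Nat.find hex with hd
    have hdmem : w ∈ nbhd ends S d := Nat.find_spec hex
    have hdpos : 0 < d := by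
      rcases Nat.eq_zero_or_pos d with h0 | h
      · exfalso; rw [h0] at hdmem; exact hwS hdmem
      · exact h
    have hnot : w ∉ nbhd ends S (d - 1) := Nat.find_min hex (by omega)
    have : w ∈ nbhd ends S ((d - 1) + 1) := by
      rw [Nat.sub_add_cancel hdpos]; exact hdmem
    simp only [nbhd, Finset.mem_filter] at this
    rcases this.2 with h' | ⟨x, hx, e, he⟩
    · exact absurd h' hnot
    · exact ⟨e, x, he, hx, hnot⟩
  classical
  choose ψ ψx hψ1 hψ2 hψ3 using hedge
  have hψmem : ∀ w : {w // w ∈ T}, (w : V) ∈ ends (ψ w) := by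
    intro w; rw [hψ1 w]; exact Sym2.mem_mk_right _ _
  have hinj : Function.Injective ψ := by
    intro w₁ w₂ heq
    by_contra hne
    have hvne : (w₁ : V) ≠ (w₂ : V) := fun h => hne (Subtype.ext h)
    have h12 : ends (ψ w₁) = s(ψx w₁, (w₁ : V)) := hψ1 w₁
    have h21 : ends (ψ w₂) = s(ψx w₂, (w₂ : V)) := hψ1 w₂
    rw [heq, h21] at h12
    rw [Sym2.eq_iff] at h12
    rcases h12 with ⟨hx, hw⟩ | ⟨hx, hw⟩
    · exact hvne hw.symm
    · -- ψx w₂ = w₁, w₂ = ψx w₁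
      set hex1 := hreach w₁.1 (Finset.mem_sdiff.mp w₁.2).1
      set hex2 := hreach w₂.1 (Finset.mem_sdiff.mp w₂.2).1
      have h1 : (w₂ : V) ∈ nbhd ends S (Nat.find hex1 - 1) := by
        rw [hw]; exact hψ2 w₁
      have h2 : (w₁ : V) ∈ nbhd ends S (Nat.find hex2 - 1) := by
        rw [← hx]; exact hψ2 w₂
      have hlt1 : Nat.find hex2 ≤ Nat.find hex1 - 1 := Nat.find_le h1
      have hlt2 : Nat.find hex1 ≤ Nat.find hex2 - 1 := Nat.find_le h2
      have hpos1 : 0 < Nat.find hex1 := by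
        rcases Nat.eq_zero_or_pos (Nat.find hex1) with h0 | h
        · exfalso
          have := Nat.find_spec hex1
          rw [h0] at this
          exact (Finset.mem_sdiff.mp w₁.2).2 this
        · exact h
      omega
  -- counting
  -- counting
  set A := Finset.univ.filter (fun e : E => ∀ v ∈ ends e, v ∈ S) with hA
  set B := T.attach.image ψ with hB
  have hBcard : B.card = T.card := by
    rw [hB, Finset.card_image_of_injective _ hinj, Finset.card_attach]
  have hdisj : Disjoint A B := by
    rw [Finset.disjoint_right]
    intro e heB heA
    obtain ⟨w, _, rfl⟩ := Finset.mem_image.mp heB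
    have hwe : (w : V) ∈ ends (ψ w) := by rw [hψ1 w]; exact Sym2.mem_mk_right _ _
    have := (Finset.mem_filter.mp heA).2 _ hwe
    exact (Finset.mem_sdiff.mp w.2).2 this
  have hsubC : A ∪ B ⊆ Finset.univ.filter fun e => ∀ v ∈ ends e, v ∈ C := by
    intro e he
    rcases Finset.mem_union.mp he with he | he
    · refine Finset.mem_filter.mpr ⟨Finset.mem_univ _, ?_⟩
      intro v hv
      exact hSC v ((Finset.mem_filter.mp he).2 v hv)
    · obtain ⟨w, _, rfl⟩ := Finset.mem_image.mp he
      refine Finset.mem_filter.mpr ⟨Finset.mem_univ _, ?_⟩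
      intro v hv
      rw [hψ1 w, Sym2.mem_iff] at hv
      rcases hv with rfl | rfl
      · exact hnbC _ _ (hψ2 w)
      · exact (Finset.mem_sdiff.mp w.2).1
  have hcount : A.card + T.card ≤ C.card := by
    calc A.card + T.card = (A ∪ B).card := by
          rw [Finset.card_union_of_disjoint hdisj, hBcard]
      _ ≤ (Finset.univ.filter fun e => ∀ v ∈ ends e, v ∈ C).card :=
          Finset.card_le_card hsubC
      _ ≤ C.card := hpf s₀
  have hTcard : T.card = C.card - S.card := Finset.card_sdiff_of_subset hSsub
  have hSle : S.card ≤ C.card := Finset.card_le_card hSsub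
  have hAE : A.card = edgesWithin ends S := rfl
  omega

lemma star_of_pf {ends : E → Sym2 V} (hpf : IsPseudoforest ends) (S : Finset V) :
    edgesWithin ends S ≤ S.card := by
  induction S using Finset.strongInductionOn with
  | _ S ih =>
  rcases S.eq_empty_or_nonempty with rfl | ⟨s₀, hs₀⟩
  · rw [edgesWithin_empty]; exact Nat.zero_le _
  · set S₁ := S.filter (fun x => x ∈ component ends s₀) with hS₁
    set S₂ := S.filter (fun x => x ∉ component ends s₀) with hS₂
    have hsub : (Finset.univ.filter fun e : E => ∀ v ∈ ends e, v ∈ S) ⊆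
        (Finset.univ.filter fun e => ∀ v ∈ ends e, v ∈ S₁) ∪
        (Finset.univ.filter fun e => ∀ v ∈ ends e, v ∈ S₂) := by
      intro e he
      have hin := (Finset.mem_filter.mp he).2
      obtain ⟨x, y, hxy⟩ := sym2_exists (ends e)
      have hxm : x ∈ ends e := by rw [hxy]; exact Sym2.mem_mk_left x y
      by_cases hxc : x ∈ component ends s₀
      · refine Finset.mem_union_left _ (Finset.mem_filter.mpr ⟨Finset.mem_univ _, ?_⟩)
        intro v hv
        exact Finset.mem_filter.mpr ⟨hin v hv, mem_component_of_mem_ends hxm hv hxc⟩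
      · refine Finset.mem_union_right _ (Finset.mem_filter.mpr ⟨Finset.mem_univ _, ?_⟩)
        intro v hv
        refine Finset.mem_filter.mpr ⟨hin v hv, fun hvc => hxc ?_⟩
        exact mem_component_of_mem_ends hv hxm hvc
    have h1 : edgesWithin ends S₁ ≤ S₁.card := by
      refine key_single hpf S₁ s₀ ?_
      intro x hx
      exact (Finset.mem_filter.mp hx).2
    have h2 : edgesWithin ends S₂ ≤ S₂.card := by
      refine ih S₂ ?_
      refine Finset.filter_ssubset.mpr ⟨s₀, hs₀, ?_⟩
      simp only [not_not]
      exact self_mem_component s₀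
    have hcards : S₁.card + S₂.card = S.card := Finset.card_filter_add_card_filter_not _
    have hle : edgesWithin ends S ≤ edgesWithin ends S₁ + edgesWithin ends S₂ :=
      le_trans (Finset.card_le_card hsub) (Finset.card_union_le _ _)
    omega

end Reach
section HallOrient

variable {V E : Type} [Fintype V] [Fintype E] [DecidableEq V]

lemma exists_indeg_le_one_orientation {ends : E → Sym2 V} (hpf : IsPseudoforest ends) :
    ∃ t h : E → V, (∀ e, ends e = s(t e, h e)) ∧ ∀ v, inD h v ≤ 1 := by
  classical
  have hall : ∀ F : Finset E, F.card ≤ (F.biUnion fun e =>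
      Finset.univ.filter (· ∈ ends e)).card := by
    intro F
    set S := F.biUnion fun e => Finset.univ.filter (· ∈ ends e) with hSdef
    have hsub : F ⊆ Finset.univ.filter fun e => ∀ v ∈ ends e, v ∈ S := by
      intro e he
      refine Finset.mem_filter.mpr ⟨Finset.mem_univ _, fun v hv => ?_⟩
      exact Finset.mem_biUnion.mpr ⟨e, he, Finset.mem_filter.mpr ⟨Finset.mem_univ _, hv⟩⟩
    calc F.card ≤ edgesWithin ends S := Finset.card_le_card hsub
      _ ≤ S.card := star_of_pf hpf S
  obtain ⟨h, hinj, hmem⟩ :=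
    (Finset.all_card_le_biUnion_card_iff_exists_injective
      (fun e : E => Finset.univ.filter (· ∈ ends e))).mp hall
  have hmem' : ∀ e, h e ∈ ends e := fun e => (Finset.mem_filter.mp (hmem e)).2
  refine ⟨fun e => Sym2.Mem.other (hmem' e), h, fun e => ?_, fun v => ?_⟩
  · rw [Sym2.eq_swap, Sym2.other_spec (hmem' e)]
  · rw [inD, Finset.card_le_one]
    intro e₁ h₁ e₂ h₂
    exact hinj ((Finset.mem_filter.mp h₁).2.trans (Finset.mem_filter.mp h₂).2.symm)

end HallOrient
section Flip

variable {V E : Type} [Fintype V] [Fintype E] [DecidableEq V]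

/-- directed walks given tail/head functions -/
def IsW (t h : E → V) : List E → V → V → Prop
  | [], a, b => a = b
  | e :: l, a, b => t e = a ∧ IsW t h l (h e) b

lemma isW_append {t h : E → V} : ∀ {l₁ l₂ : List E} {a b : V},
    IsW t h (l₁ ++ l₂) a b → ∃ z, IsW t h l₁ a z ∧ IsW t h l₂ z b
  | [], l₂, a, b, hw => ⟨a, rfl, hw⟩
  | e :: l₁, l₂, a, b, hw => by
      obtain ⟨he, hw'⟩ := hw
      obtain ⟨z, h1, h2⟩ := isW_append hw'
      exact ⟨z, ⟨he, h1⟩, h2⟩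

lemma isW_snoc {t h : E → V} : ∀ {l : List E} {a b : V} {e : E},
    IsW t h l a b → t e = b → IsW t h (l ++ [e]) a (h e)
  | [], a, b, e, hw, hte => by
      exact ⟨by rw [hte, hw], rfl⟩
  | e' :: l, a, b, e, hw, hte => by
      obtain ⟨he', hw'⟩ := hw
      exact ⟨he', isW_snoc hw' hte⟩

lemma isW_congr {t h t' h' : E → V} : ∀ {l : List E} {a b : V},
    (∀ e ∈ l, t' e = t e ∧ h' e = h e) → IsW t h l a b → IsW t' h' l a b
  | [], _, _, _, hw => hw
  | e :: l, a, b, hsame, hw => by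
      obtain ⟨he, hw'⟩ := hw
      have h1 := hsame e List.mem_cons_self
      refine ⟨h1.1.trans he, ?_⟩
      rw [h1.2]
      exact isW_congr (fun e' he' => hsame e' (List.mem_cons_of_mem _ he')) hw'

lemma reflTransGen_isW {t h : E → V} {u y : V}
    (hr : Relation.ReflTransGen (fun a b => ∃ e, t e = a ∧ h e = b) u y) :
    ∃ l, IsW t h l u y := by
  induction hr with
  | refl => exact ⟨[], rfl⟩
  | tail _ hab ih =>
      obtain ⟨l, hl⟩ := ih
      obtain ⟨e, het, heh⟩ := hab
      exact ⟨l ++ [e], by rw [← heh]; exact isW_snoc hl het⟩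

lemma filter_update_eq {g : E → V} {e₁ : E} {x v : V} :
    (Finset.univ.filter fun e => Function.update g e₁ x e = v) =
      if x = v then insert e₁ (Finset.univ.filter fun e => g e = v)
      else (Finset.univ.filter fun e => g e = v).erase e₁ := by
  ext e
  by_cases he : e = e₁
  · subst he
    simp only [Finset.mem_filter, Finset.mem_univ, true_and, Function.update_self]
    split_ifs with hx
    · simp [hx]
    · simp [hx]
  · simp only [Finset.mem_filter, Finset.mem_univ, true_and, Function.update_of_ne he]
    split_ifs with hx
    · simp [Finset.mem_insert, he, Finset.mem_filter]
    · simp [Finset.mem_erase, he, Finset.mem_filter]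

lemma sum_eq_on_pair {g g' : V → ℕ} {u w : V} (huw : u ≠ w)
    (hpair : g' u + g' w = g u + g w)
    (hrest : ∀ v, v ≠ u → v ≠ w → g' v = g v) :
    ∑ v, g' v = ∑ v, g v := by
  rw [← Finset.sum_add_sum_compl ({u, w} : Finset V) g',
      ← Finset.sum_add_sum_compl ({u, w} : Finset V) g]
  congr 1
  · rw [Finset.sum_pair huw, Finset.sum_pair huw, hpair]
  · refine Finset.sum_congr rfl fun v hv => ?_
    simp only [Finset.mem_compl, Finset.mem_insert, Finset.mem_singleton, not_or] at hv
    exact hrest v hv.1 hv.2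

end Flip
section Flip2

variable {V E : Type} [Fintype V] [Fintype E] [DecidableEq V]

def Phi (f : V → ℕ) (t : E → V) : ℕ := ∑ v, (outD t v - (f v - 1))

lemma flipaux (ends : E → Sym2 V) (f : V → ℕ) (hf2 : ∀ v, 2 ≤ f v)
    (hdeg : ∀ v, degree ends v ≤ f v) :
    ∀ m : ℕ, ∀ t h : E → V, (∀ e, ends e = s(t e, h e)) → (∀ v, inD h v ≤ 1) →
    ∀ u, f u ≤ outD t u →
    ∀ l y, IsW t h l u y → outD t y + 2 ≤ f y → l.length = m →
    (∀ l' y', IsW t h l' u y' → outD t y' + 2 ≤ f y' → m ≤ l'.length) →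
    ∃ t' h' : E → V, (∀ e, ends e = s(t' e, h' e)) ∧ (∀ v, inD h' v ≤ 1) ∧
      Phi f t' < Phi f t := by
  intro m
  induction m using Nat.strong_induction_on with
  | _ m IH =>
  intro t h hth hin u hu l y hw hy hlen hmin
  have hio : ∀ v, outD t v + inD h v = degree ends v :=
    fun v => (degree_eq_out_add_in ends t h hth v).symm
  have hinu : inD h u = 0 := by
    have h1 := hio u
    have h2 := hdeg u
    omega
  have houtu : outD t u = f u := by
    have h1 := hio u
    have h2 := hdeg u
    omega
  match m, l, hlen with
  | 0, [], _ =>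
      -- y = u, contradiction
      have hyu : u = y := hw
      rw [← hyu] at hy
      omega
  | Nat.succ m', e₁ :: l'', hlen =>
  obtain ⟨ht1, hw''⟩ := hw
  set w := h e₁ with hwdef
  have hlen'' : l''.length = m' := by simpa using hlen
  have hwmem : e₁ ∈ Finset.univ.filter fun e => h e = w := by
    simp [Finset.mem_filter, hwdef]
  have hinw : 1 ≤ inD h w := by
    rw [inD, ← Finset.card_singleton e₁]
    exact Finset.card_le_card (Finset.singleton_subset_iff.mpr hwmem)
  have hwne : w ≠ u := by
    intro hwu
    rw [hwu] at hinw
    omega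
  have he₁mem : e₁ ∈ Finset.univ.filter fun e => t e = u := by
    simp [Finset.mem_filter, ht1]
  have he₁not : e₁ ∉ l'' := by
    intro hmem
    obtain ⟨a, b, hab⟩ := List.append_of_mem hmem
    rw [hab] at hw''
    obtain ⟨z, _, hz2⟩ := isW_append hw''
    have hz : t e₁ = z := hz2.1
    have : IsW t h (e₁ :: b) u y := by
      rw [← ht1, hz]
      exact hz2
    have hge := hmin _ _ this hy
    rw [hab] at hlen''
    simp at hlen''
    simp at hge
    omega
  set t' := Function.update t e₁ w with ht'def
  set h' := Function.update h e₁ u with hh'def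
  have hth' : ∀ e, ends e = s(t' e, h' e) := by
    intro e
    by_cases he : e = e₁
    · subst he
      rw [ht'def, hh'def, Function.update_self, Function.update_self,
        Sym2.eq_swap, hth e, ht1, ← hwdef]
    · rw [ht'def, hh'def, Function.update_of_ne he, Function.update_of_ne he]
      exact hth e
  have hfilh : (Finset.univ.filter fun e => h e = u) = ∅ := by
    rw [← Finset.card_eq_zero]
    exact hinu
  have hin' : ∀ v, inD h' v ≤ 1 := by
    intro v
    rw [inD, hh'def, filter_update_eq]
    by_cases hv : u = v
    · rw [if_pos hv, ← hv, hfilh]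
      simp
    · rw [if_neg hv]
      exact le_trans (Finset.card_le_card (Finset.erase_subset _ _)) (hin v)
  -- out-degree computations
  have hout_u : outD t' u = f u - 1 := by
    rw [outD, ht'def, filter_update_eq, if_neg hwne,
      Finset.card_erase_of_mem he₁mem]
    rw [← outD, houtu]
  have hout_w : outD t' w = outD t w + 1 := by
    rw [outD, ht'def, filter_update_eq, if_pos rfl,
      Finset.card_insert_of_notMem (by simp [ht1, Ne.symm hwne])]
    rfl
  have hout_other : ∀ v, v ≠ u → v ≠ w → outD t' v = outD t v := by
    intro v hvu hvw
    rw [outD, ht'def, filter_update_eq, if_neg (fun hh => hvw hh.symm),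
      Finset.erase_eq_of_notMem (by simp [ht1, hvu.symm]), ← outD]
  by_cases hcase : outD t w + 2 ≤ f w
  · -- done in one flip
    refine ⟨t', h', hth', hin', ?_⟩
    rw [Phi, Phi]
    refine Finset.sum_lt_sum (fun v _ => ?_) ⟨u, Finset.mem_univ u, ?_⟩
    · by_cases hvu : v = u
      · subst hvu
        rw [hout_u, houtu]
        have := hf2 v
        omega
      · by_cases hvw : v = w
        · subst hvw
          rw [hout_w]
          omega
        · rw [hout_other v hvu hvw]
    · rw [hout_u, houtu]
      have := hf2 u
      omega
  · -- violation moves to w, recurse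
    have hinw1 : inD h w = 1 := le_antisymm (hin w) hinw
    have houtw : outD t w = f w - 1 := by
      have h1 := hio w
      have h2 := hdeg w
      have h3 := hf2 w
      omega
    have hyu : y ≠ u := by
      intro hyu
      rw [hyu] at hy
      omega
    have hyw : y ≠ w := by
      intro hyw
      rw [hyw] at hy
      omega
    have hwalk' : IsW t' h' l'' w y := by
      refine isW_congr (fun e he => ?_) hw''
      have hne : e ≠ e₁ := fun hh => he₁not (hh ▸ he)
      rw [ht'def, hh'def, Function.update_of_ne hne, Function.update_of_ne hne]
      exact ⟨rfl, rfl⟩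
    have houty' : outD t' y = outD t y := hout_other y hyu hyw
    have hexw : ∃ n, ∃ l' y', IsW t' h' l' w y' ∧ outD t' y' + 2 ≤ f y' ∧
        l'.length = n := by
      refine ⟨l''.length, l'', y, hwalk', ?_, rfl⟩
      rw [houty']
      exact hy
    set n₀ := Nat.find hexw with hn₀
    obtain ⟨l₀, y₀, hw₀, hy₀, hlen₀⟩ := Nat.find_spec hexw
    have hn₀le : n₀ ≤ m' := by
      have : n₀ ≤ l''.length :=
        Nat.find_le ⟨l'', y, hwalk', by rw [houty']; exact hy, rfl⟩
      omega
    have hmin₀ : ∀ l' y', IsW t' h' l' w y' → outD t' y' + 2 ≤ f y' →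
        n₀ ≤ l'.length := by
      intro l' y' hw' hy'
      by_contra hlt
      exact Nat.find_min hexw (by omega) ⟨l', y', hw', hy', rfl⟩
    have hfw' : f w ≤ outD t' w := by
      rw [hout_w, houtw]
      have := hf2 w
      omega
    obtain ⟨t'', h'', hth'', hin'', hPhi⟩ :=
      IH n₀ (by omega) t' h' hth' hin' w hfw' l₀ y₀ hw₀ hy₀ hlen₀ hmin₀
    refine ⟨t'', h'', hth'', hin'', ?_⟩
    have hPhiEq : Phi f t' = Phi f t := by
      refine sum_eq_on_pair hwne.symm ?_ (fun v h1 h2 => by rw [hout_other v h1 h2])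
      have h1 := hf2 u
      have h2 := hf2 w
      rw [hout_u, houtu, hout_w, houtw]
      omega
    omega

end Flip2
section Flip3

variable {V E : Type} [Fintype V] [Fintype E] [DecidableEq V]

lemma sum_outD_filter (t : E → V) (S : Finset V) :
    ∑ v ∈ S, outD t v = (Finset.univ.filter fun e => t e ∈ S).card := by
  rw [Finset.card_eq_sum_card_fiberwise
    (f := t) (s := Finset.univ.filter fun e => t e ∈ S) (t := S) (fun e he => (Finset.mem_filter.mp he).2)]
  refine Finset.sum_congr rfl fun v hv => ?_
  rw [outD]
  congr 1
  ext e
  simp only [Finset.mem_filter, Finset.mem_univ, true_and]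
  exact ⟨fun h2 => ⟨by rw [h2]; exact hv, h2⟩, fun h2 => h2.2⟩

lemma improve (ends : E → Sym2 V) (f : V → ℕ) (hf2 : ∀ v, 2 ≤ f v)
    (hdeg : ∀ v, degree ends v ≤ f v) (t h : E → V)
    (hth : ∀ e, ends e = s(t e, h e)) (hin : ∀ v, inD h v ≤ 1)
    (hpos : 0 < Phi f t) :
    ∃ t' h' : E → V, (∀ e, ends e = s(t' e, h' e)) ∧ (∀ v, inD h' v ≤ 1) ∧
      Phi f t' < Phi f t := by
  have hio : ∀ v, outD t v + inD h v = degree ends v :=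
    fun v => (degree_eq_out_add_in ends t h hth v).symm
  -- find a violator
  obtain ⟨u, hu⟩ : ∃ u, f u ≤ outD t u := by
    by_contra hno
    push_neg at hno
    have : Phi f t = 0 := by
      rw [Phi]
      refine Finset.sum_eq_zero fun v _ => ?_
      have h1 := hno v
      have h2 := hf2 v
      omega
    omega
  have hinu : inD h u = 0 := by
    have h1 := hio u; have h2 := hdeg u; omega
  set step := fun a b : V => ∃ e, t e = a ∧ h e = b with hstep
  set S := Finset.univ.filter (fun v => Relation.ReflTransGen step u v) with hS
  have huS : u ∈ S := Finset.mem_filter.mpr ⟨Finset.mem_univ _, .refl⟩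
  have hclosed : ∀ e : E, t e ∈ S → h e ∈ S := by
    intro e hte
    refine Finset.mem_filter.mpr ⟨Finset.mem_univ _, ?_⟩
    exact ((Finset.mem_filter.mp hte).2).tail ⟨e, rfl, rfl⟩
  -- target existence
  obtain ⟨y, hyS, hy⟩ : ∃ y ∈ S, outD t y + 2 ≤ f y := by
    by_contra hno
    push_neg at hno
    have hsub : (Finset.univ.filter fun e => t e ∈ S) ⊆
        (Finset.univ.filter fun e => h e ∈ S) := by
      intro e he
      exact Finset.mem_filter.mpr ⟨Finset.mem_univ _,
        hclosed e (Finset.mem_filter.mp he).2⟩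
    have hsin : ∑ v ∈ S, inD h v = (Finset.univ.filter fun e => h e ∈ S).card := by
      rw [Finset.card_eq_sum_card_fiberwise
        (f := h) (s := Finset.univ.filter fun e => h e ∈ S) (t := S) (fun e he => (Finset.mem_filter.mp he).2)]
      refine Finset.sum_congr rfl fun v hv => ?_
      rw [inD]
      congr 1
      ext e
      simp only [Finset.mem_filter, Finset.mem_univ, true_and]
      exact ⟨fun h2 => ⟨by rw [h2]; exact hv, h2⟩, fun h2 => h2.2⟩
    have hsout := sum_outD_filter t S
    have hinle : ∑ v ∈ S, inD h v ≤ S.card - 1 := by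
      rw [← Finset.add_sum_erase _ _ huS, hinu, zero_add]
      calc ∑ v ∈ S.erase u, inD h v ≤ ∑ v ∈ S.erase u, 1 :=
            Finset.sum_le_sum fun v _ => hin v
        _ = (S.erase u).card := by rw [Finset.sum_const, smul_eq_mul, mul_one]
        _ = S.card - 1 := Finset.card_erase_of_mem huS
    have houtge : S.card + 1 ≤ ∑ v ∈ S, outD t v := by
      rw [← Finset.add_sum_erase _ _ huS]
      have h1 : ∀ v ∈ S.erase u, 1 ≤ outD t v := by
        intro v hv
        have hvS := Finset.mem_of_mem_erase hv
        have := hno v hvS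
        have := hf2 v
        omega
      have h2 : (S.erase u).card ≤ ∑ v ∈ S.erase u, outD t v := by
        calc (S.erase u).card = ∑ v ∈ S.erase u, 1 := by
              rw [Finset.sum_const, smul_eq_mul, mul_one]
          _ ≤ _ := Finset.sum_le_sum h1
      have h3 : 1 ≤ S.card := Finset.card_pos.mpr ⟨u, huS⟩
      have h4 := Finset.card_erase_of_mem huS
      have h5 := hf2 u
      omega
    have hcards := Finset.card_le_card hsub
    have h3 : 1 ≤ S.card := Finset.card_pos.mpr ⟨u, huS⟩
    omega
  -- get a walk and a minimal witness
  obtain ⟨l, hl⟩ := reflTransGen_isW (Finset.mem_filter.mp hyS).2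
  have hex : ∃ n, ∃ l' y', IsW t h l' u y' ∧ outD t y' + 2 ≤ f y' ∧
      l'.length = n := ⟨l.length, l, y, hl, hy, rfl⟩
  obtain ⟨l₀, y₀, hw₀, hy₀, hlen₀⟩ := Nat.find_spec hex
  refine flipaux ends f hf2 hdeg (Nat.find hex) t h hth hin u hu l₀ y₀ hw₀ hy₀ hlen₀ ?_
  intro l' y' hw' hy'
  by_contra hlt
  exact Nat.find_min hex (by omega) ⟨l', y', hw', hy', rfl⟩

lemma phase_out (ends : E → Sym2 V) (f : V → ℕ) (hf2 : ∀ v, 2 ≤ f v)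
    (hdeg : ∀ v, degree ends v ≤ f v) :
    ∀ (t h : E → V), (∀ e, ends e = s(t e, h e)) → (∀ v, inD h v ≤ 1) →
    ∃ t' h' : E → V, (∀ e, ends e = s(t' e, h' e)) ∧ (∀ v, inD h' v ≤ 1) ∧
      ∀ v, outD t' v ≤ f v - 1 := by
  intro t h
  generalize hn : Phi f t = n
  induction n using Nat.strong_induction_on generalizing t h with
  | _ n IH =>
  intro hth hin
  rcases Nat.eq_zero_or_pos n with rfl | hpos
  · refine ⟨t, h, hth, hin, fun v => ?_⟩
    have h2 : ∑ v, (outD t v - (f v - 1)) = 0 := hn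
    have : outD t v - (f v - 1) = 0 :=
      Finset.sum_eq_zero_iff.mp h2 v (Finset.mem_univ v)
    omega
  · obtain ⟨t', h', hth', hin', hlt⟩ := improve ends f hf2 hdeg t h hth hin (hn ▸ hpos)
    exact IH (Phi f t') (by omega) t' h' rfl hth' hin'

lemma phase1 (ends : E → Sym2 V) (f : V → ℕ) (hf2 : ∀ v, 2 ≤ f v)
    (hpf : IsPseudoforest ends) (hdeg : ∀ v, degree ends v ≤ f v) :
    ∃ t h : E → V, (∀ e, ends e = s(t e, h e)) ∧ (∀ v, inD h v ≤ 1) ∧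
      ∀ v, outD t v ≤ f v - 1 := by
  obtain ⟨t, h, hth, hin⟩ := exists_indeg_le_one_orientation hpf
  exact phase_out ends f hf2 hdeg t h hth hin

end Flip3
section Kern

variable {E' α β : Type} [Fintype E']

def Beats (TL : E' → α) (HD : E' → β) (cc : E' → ℕ) (e e' : E') : Prop :=
  (TL e' = TL e ∧ cc e' < cc e) ∨ (HD e' = HD e ∧ cc e < cc e')

lemma kernel_exists (TL : E' → α) (HD : E' → β) (cc : E' → ℕ)
    (hpT : ∀ e e', TL e = TL e' → cc e = cc e' → e = e')
    (hpH : ∀ e e', HD e = HD e' → cc e = cc e' → e = e') :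
    ∀ A : Finset E', ∃ K, K ⊆ A ∧
      (∀ e ∈ K, ∀ e' ∈ K, e ≠ e' → TL e ≠ TL e' ∧ HD e ≠ HD e') ∧
      (∀ e ∈ A, e ∉ K → ∃ e' ∈ K, Beats TL HD cc e e') := by
  intro A
  induction A using Finset.strongInductionOn with
  | _ A ih =>
  classical
  set P := A.filter (fun e => ∀ e' ∈ A, TL e' = TL e → cc e ≤ cc e') with hP
  by_cases hmat : ∀ e ∈ P, ∀ e' ∈ P, e ≠ e' → HD e ≠ HD e'
  · refine ⟨P, Finset.filter_subset _ _, ?_, ?_⟩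
    · intro e he e' he' hne
      refine ⟨?_, hmat e he e' he' hne⟩
      intro hTL
      have h1 := (Finset.mem_filter.mp he).2 e' (Finset.mem_of_mem_filter _ he') hTL.symm
      have h2 := (Finset.mem_filter.mp he').2 e (Finset.mem_of_mem_filter _ he) hTL
      exact hne (hpT e e' hTL (le_antisymm h1 h2))
    · intro e heA heP
      obtain ⟨e₀, he₀, hmin⟩ := Finset.exists_min_image
        (A.filter fun e' => TL e' = TL e) cc ⟨e, Finset.mem_filter.mpr ⟨heA, rfl⟩⟩
      have he₀A : e₀ ∈ A := Finset.mem_of_mem_filter _ he₀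
      have he₀TL : TL e₀ = TL e := (Finset.mem_filter.mp he₀).2
      have he₀P : e₀ ∈ P := by
        refine Finset.mem_filter.mpr ⟨he₀A, fun e' he' hTL' => ?_⟩
        exact hmin e' (Finset.mem_filter.mpr ⟨he', hTL'.trans he₀TL⟩)
      have hle : cc e₀ ≤ cc e := hmin e (Finset.mem_filter.mpr ⟨heA, rfl⟩)
      have hne : e₀ ≠ e := fun hh => heP (hh ▸ he₀P)
      have hlt : cc e₀ < cc e := by
        rcases lt_or_eq_of_le hle with h | h
        · exact h
        · exact absurd (hpT e₀ e he₀TL h) hne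
      exact ⟨e₀, he₀P, Or.inl ⟨he₀TL, hlt⟩⟩
  · push_neg at hmat
    obtain ⟨e₁, he₁, e₂, he₂, hne, hHD⟩ := hmat
    have hccne : cc e₁ ≠ cc e₂ := fun hcc => hne (hpH e₁ e₂ hHD hcc)
    -- let a be the one with smaller color, b the other
    obtain ⟨a, b, haP, hbP, hab, hHDab⟩ :
        ∃ a b, a ∈ P ∧ b ∈ P ∧ cc a < cc b ∧ HD a = HD b := by
      rcases lt_or_gt_of_ne hccne with h | h
      · exact ⟨e₁, e₂, he₁, he₂, h, hHD⟩
      · exact ⟨e₂, e₁, he₂, he₁, h, hHD.symm⟩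
    have haA : a ∈ A := Finset.mem_of_mem_filter _ haP
    have hbA : b ∈ A := Finset.mem_of_mem_filter _ hbP
    have habne : a ≠ b := fun hh => (lt_irrefl _ (hh ▸ hab))
    set A' := A.erase a with hA'
    obtain ⟨K, hKsub, hKind, hKdom⟩ := ih A' (Finset.erase_ssubset haA)
    refine ⟨K, hKsub.trans (Finset.erase_subset _ _), hKind, ?_⟩
    intro e heA heK
    by_cases hea : e = a
    · subst hea
      have hbA' : b ∈ A' := Finset.mem_erase.mpr ⟨habne.symm, hbA⟩
      by_cases hbK : b ∈ K
      · exact ⟨b, hbK, Or.inr ⟨hHDab.symm, hab⟩⟩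
      · obtain ⟨ee, heeK, hbeats⟩ := hKdom b hbA' hbK
        rcases hbeats with ⟨hT, hc⟩ | ⟨hH, hc⟩
        · -- contradicts b being tail-minimal in A
          exfalso
          have heeA : ee ∈ A := Finset.mem_of_mem_erase (hKsub heeK)
          have := (Finset.mem_filter.mp hbP).2 ee heeA hT
          omega
        · exact ⟨ee, heeK, Or.inr ⟨hH.trans hHDab.symm, lt_trans hab hc⟩⟩
    · exact hKdom e (Finset.mem_erase.mpr ⟨hea, heA⟩) heK

end Kern
section Galv

variable {E' α β : Type} [Fintype E']

lemma galvin_main (TL : E' → α) (HD : E' → β) (cc : E' → ℕ)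
    (hpT : ∀ e e', TL e = TL e' → cc e = cc e' → e = e')
    (hpH : ∀ e e', HD e = HD e' → cc e = cc e' → e = e') :
    ∀ A : Finset E', ∀ L : E' → Finset ℕ,
    (∀ e ∈ A, (A.filter (fun e' => Beats TL HD cc e e')).card < (L e).card) →
    ∃ C : E' → ℕ, (∀ e ∈ A, C e ∈ L e) ∧
      ∀ e ∈ A, ∀ e' ∈ A, e ≠ e' → (TL e = TL e' ∨ HD e = HD e') → C e ≠ C e' := by
  intro A
  induction A using Finset.strongInductionOn with
  | _ A ih =>
  intro L hL
  classical
  rcases A.eq_empty_or_nonempty with rfl | ⟨e₀, he₀⟩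
  · exact ⟨fun _ => 0, by simp, by simp⟩
  have hLne : (L e₀).Nonempty := by
    rw [← Finset.card_pos]
    have := hL e₀ he₀
    omega
  obtain ⟨a, ha⟩ := hLne
  set Aa := A.filter (fun e => a ∈ L e) with hAa
  have he₀a : e₀ ∈ Aa := Finset.mem_filter.mpr ⟨he₀, ha⟩
  obtain ⟨K, hKsub, hKind, hKdom⟩ := kernel_exists TL HD cc hpT hpH Aa
  have hKne : K.Nonempty := by
    by_contra hKe
    rw [Finset.not_nonempty_iff_eq_empty] at hKe
    obtain ⟨e', he', _⟩ := hKdom e₀ he₀a (by rw [hKe]; exact Finset.notMem_empty _)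
    rw [hKe] at he'
    exact Finset.notMem_empty _ he'
  set A' := A \ K with hA'
  have hA'ss : A' ⊂ A := by
    obtain ⟨k₀, hk₀⟩ := hKne
    refine Finset.ssubset_iff_of_subset (Finset.sdiff_subset) |>.mpr ?_
    exact ⟨k₀, Finset.mem_of_mem_filter _ (hKsub hk₀), by simp [hA', hk₀]⟩
  set L' := fun e => if e ∈ Aa then (L e).erase a else L e with hL'
  have hinv : ∀ e ∈ A', (A'.filter (fun e' => Beats TL HD cc e e')).card < (L' e).card := by
    intro e heA'
    have heA : e ∈ A := (Finset.mem_sdiff.mp heA').1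
    have heK : e ∉ K := (Finset.mem_sdiff.mp heA').2
    have hmono : A'.filter (fun e' => Beats TL HD cc e e') ⊆
        A.filter (fun e' => Beats TL HD cc e e') :=
      Finset.filter_subset_filter _ Finset.sdiff_subset
    by_cases hea : e ∈ Aa
    · obtain ⟨ee, heeK, hbeats⟩ := hKdom e hea heK
      have hss : A'.filter (fun e' => Beats TL HD cc e e') ⊂
          A.filter (fun e' => Beats TL HD cc e e') := by
        refine Finset.ssubset_iff_of_subset hmono |>.mpr ?_
        refine ⟨ee, Finset.mem_filter.mpr
          ⟨Finset.mem_of_mem_filter _ (hKsub heeK), hbeats⟩, ?_⟩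
        intro hmem
        exact ((Finset.mem_sdiff.mp ((Finset.mem_filter.mp hmem).1)).2) heeK
      have h1 := Finset.card_lt_card hss
      have h2 := hL e heA
      have h3 : (L' e).card = (L e).card - 1 := by
        rw [hL']
        simp only [if_pos hea]
        exact Finset.card_erase_of_mem ((Finset.mem_filter.mp hea).2)
      omega
    · have h1 := Finset.card_le_card hmono
      have h2 := hL e heA
      have h3 : (L' e).card = (L e).card := by rw [hL']; simp [hea]
      omega
  obtain ⟨C', hC'mem, hC'prop⟩ := ih A' hA'ss L' hinv
  refine ⟨fun e => if e ∈ K then a else C' e, ?_, ?_⟩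
  · intro e heA
    by_cases heK : e ∈ K
    · simp only [if_pos heK]
      exact (Finset.mem_filter.mp (hKsub heK)).2
    · simp only [if_neg heK]
      have heA' : e ∈ A' := Finset.mem_sdiff.mpr ⟨heA, heK⟩
      have := hC'mem e heA'
      simp only [hL'] at this
      by_cases hea : e ∈ Aa
      · rw [if_pos hea] at this
        exact Finset.mem_of_mem_erase this
      · rw [if_neg hea] at this
        exact this
  · intro e heA e' he'A hne hadj
    by_cases heK : e ∈ K <;> by_cases he'K : e' ∈ K
    · exfalso
      have := hKind e heK e' he'K hne
      rcases hadj with h | h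
      · exact this.1 h
      · exact this.2 h
    · simp only [if_pos heK, if_neg he'K]
      have he'A' : e' ∈ A' := Finset.mem_sdiff.mpr ⟨he'A, he'K⟩
      have hmem := hC'mem e' he'A'
      simp only [hL'] at hmem
      by_cases he'a : e' ∈ Aa
      · rw [if_pos he'a] at hmem
        exact fun hh => (Finset.mem_erase.mp hmem).1 hh.symm
      · rw [if_neg he'a] at hmem
        intro hh
        exact he'a (Finset.mem_filter.mpr ⟨he'A, hh ▸ hmem⟩)
    · simp only [if_neg heK, if_pos he'K]
      have heA' : e ∈ A' := Finset.mem_sdiff.mpr ⟨heA, heK⟩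
      have hmem := hC'mem e heA'
      simp only [hL'] at hmem
      by_cases hea : e ∈ Aa
      · rw [if_pos hea] at hmem
        exact (Finset.mem_erase.mp hmem).1
      · rw [if_neg hea] at hmem
        intro hh
        exact hea (Finset.mem_filter.mpr ⟨heA, hh ▸ hmem⟩)
    · simp only [if_neg heK, if_neg he'K]
      exact hC'prop e (Finset.mem_sdiff.mpr ⟨heA, heK⟩) e'
        (Finset.mem_sdiff.mpr ⟨he'A, he'K⟩) hne hadj

end Galv
section Verif

variable {V E : Type} [Fintype V] [Fintype E] [DecidableEq V]

lemma verif (ends : E → Sym2 V) (f : V → ℕ) (hf2 : ∀ v, 2 ≤ f v)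
    (P : E → Prop) [Fintype {e // P e}] (t h : E → V) (g : E → ℕ)
    (hth : ∀ e, P e → ends e = s(t e, h e))
    (hinj : ∀ e e', P e → P e' → h e = h e' → e = e')
    (hg : ∀ e, P e → g e < f (t e) - 1)
    (hginj : ∀ e e', P e → P e' → t e = t e' → g e = g e' → e = e') :
    IsPseudoforest (subEnds ends P) ∧ ∀ v, degree (subEnds ends P) v ≤ f v := by
  have hth' : ∀ e : {e // P e}, subEnds ends P e = s(t e.val, h e.val) :=
    fun e => hth e.val e.property
  have hmemh : ∀ e : {e // P e}, h e.val ∈ subEnds ends P e := by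
    intro e
    rw [hth' e]
    exact Sym2.mem_mk_right _ _
  constructor
  · intro v
    rw [edgesWithin]
    refine Finset.card_le_card_of_injOn (fun e => h e.val) ?_ ?_
    · intro e he
      have hall := (Finset.mem_filter.mp he).2
      exact hall _ (hmemh e)
    · intro e₁ _ e₂ _ h12
      exact Subtype.ext (hinj _ _ e₁.property e₂.property h12)
  · intro v
    rw [degree_eq_out_add_in (subEnds ends P) (fun e => t e.val) (fun e => h e.val)
      hth' v]
    have h1 : outD (fun e : {e // P e} => t e.val) v ≤ f v - 1 := by
      rw [outD]
      have : (Finset.range (f v - 1)).card = f v - 1 := Finset.card_range _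
      rw [← this]
      refine Finset.card_le_card_of_injOn (fun e => g e.val) ?_ ?_
      · intro e he
        have htv : t e.val = v := (Finset.mem_filter.mp he).2
        rw [Finset.mem_coe, Finset.mem_range, ← htv]
        exact hg e.val e.property
      · intro e₁ h₁ e₂ h₂ h12
        have ht1 : t e₁.val = v := (Finset.mem_filter.mp h₁).2
        have ht2 : t e₂.val = v := (Finset.mem_filter.mp h₂).2
        exact Subtype.ext (hginj _ _ e₁.property e₂.property (ht1.trans ht2.symm) h12)
    have h2 : inD (fun e : {e // P e} => h e.val) v ≤ 1 := by
      rw [inD, Finset.card_le_one]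
      intro a ha b hb
      have ha' := (Finset.mem_filter.mp ha).2
      have hb' := (Finset.mem_filter.mp hb).2
      exact Subtype.ext (hinj _ _ a.property b.property (ha'.trans hb'.symm))
    have := hf2 v
    omega

lemma exists_paf_coloring (ends : E → Sym2 V) (f : V → ℕ) (hf2 : ∀ v, 2 ≤ f v) :
    ∃ k : ℕ, ∃ C : E → Fin k, PafColoring ends f C := by
  obtain ⟨t, h, hth⟩ := exists_tail_head ends
  refine ⟨Fintype.card E, Fintype.equivFin E, fun c => ?_⟩
  have hinj : ∀ e e' : E, Fintype.equivFin E e = c → Fintype.equivFin E e' = c →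
      e = e' := by
    intro e e' h1 h2
    exact (Fintype.equivFin E).injective (h1.trans h2.symm)
  exact verif ends f hf2 _ t h (fun _ => 0) (fun e _ => hth e)
    (fun e e' h1 h2 _ => hinj e e' h1 h2)
    (fun e _ => by show 0 < f (t e) - 1; have := hf2 (t e); omega)
    (fun e e' h1 h2 _ _ => hinj e e' h1 h2)

end Verif
section Hard

variable {V E : Type} [Fintype V] [Fintype E] [DecidableEq V]

lemma hard_direction (ends : E → Sym2 V) (f : V → ℕ) (hf2 : ∀ v, 2 ≤ f v)
    (k : ℕ) (C₀ : E → Fin k) (hC₀ : PafColoring ends f C₀)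
    (L : E → Finset ℕ) (hL : ∀ e, k ≤ (L e).card) :
    ∃ C : E → ℕ, (∀ e, C e ∈ L e) ∧ ∀ c : ℕ,
      IsPseudoforest (subEnds ends fun e => C e = c) ∧
        ∀ v, degree (subEnds ends fun e => C e = c) v ≤ f v := by
  classical
  have hcls := fun c : Fin k =>
    phase1 (subEnds ends fun e => C₀ e = c) f hf2 (hC₀ c).1 (hC₀ c).2
  choose tc hc hthc hinc houtc using hcls
  set t : E → V := fun e => tc (C₀ e) ⟨e, rfl⟩ with htdef
  set h : E → V := fun e => hc (C₀ e) ⟨e, rfl⟩ with hhdef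
  have keyT : ∀ (e : E) (c : Fin k) (hce : C₀ e = c), t e = tc c ⟨e, hce⟩ := by
    intro e c hce; subst hce; rfl
  have keyH : ∀ (e : E) (c : Fin k) (hce : C₀ e = c), h e = hc c ⟨e, hce⟩ := by
    intro e c hce; subst hce; rfl
  have hth : ∀ e, ends e = s(t e, h e) := fun e => hthc (C₀ e) ⟨e, rfl⟩
  -- head injective within C₀-classes
  have hinH : ∀ e e', C₀ e = C₀ e' → h e = h e' → e = e' := by
    intro e e' hc0 hh
    have h1 := keyH e (C₀ e') hc0
    have h2 := keyH e' (C₀ e') rfl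
    have hcard : inD (hc (C₀ e')) (hc (C₀ e') ⟨e', rfl⟩) ≤ 1 := hinc (C₀ e') _
    rw [inD] at hcard
    have hmem1 : (⟨e, hc0⟩ : {x // C₀ x = C₀ e'}) ∈ Finset.univ.filter
        (fun x : {x // C₀ x = C₀ e'} => hc (C₀ e') x = hc (C₀ e') ⟨e', rfl⟩) := by
      refine Finset.mem_filter.mpr ⟨Finset.mem_univ _, ?_⟩
      rw [← h1, hh, h2]
    have hmem2 : (⟨e', rfl⟩ : {x // C₀ x = C₀ e'}) ∈ Finset.univ.filter
        (fun x : {x // C₀ x = C₀ e'} => hc (C₀ e') x = hc (C₀ e') ⟨e', rfl⟩) :=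
      Finset.mem_filter.mpr ⟨Finset.mem_univ _, rfl⟩
    have := Finset.card_le_one.mp hcard _ hmem1 _ hmem2
    exact congrArg Subtype.val this
  -- slot function
  set idx : E → ℕ := fun e => (Fintype.equivFin E e : ℕ) with hidxdef
  have hidxinj : ∀ e e' : E, idx e = idx e' → e = e' := by
    intro e e' hh
    exact (Fintype.equivFin E).injective (Fin.ext hh)
  set p : E → ℕ := fun e =>
    (Finset.univ.filter fun e' => C₀ e' = C₀ e ∧ t e' = t e ∧ idx e' < idx e).card
    with hpdef
  have hpb : ∀ e, p e < f (t e) - 1 := by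
    intro e
    set Sout := Finset.univ.filter
      (fun x : {x // C₀ x = C₀ e} => tc (C₀ e) x = t e) with hSout
    have hSoutcard : Sout.card ≤ f (t e) - 1 := houtc (C₀ e) (t e)
    have hmemSout : (⟨e, rfl⟩ : {x // C₀ x = C₀ e}) ∈ Sout :=
      Finset.mem_filter.mpr ⟨Finset.mem_univ _, (keyT e (C₀ e) rfl).symm⟩
    have hple : p e ≤ (Sout.erase ⟨e, rfl⟩).card := by
      rw [hpdef]
      refine Finset.card_le_card_of_injOn
        (fun e' => if hce : C₀ e' = C₀ e then (⟨e', hce⟩ : {x // C₀ x = C₀ e}) else ⟨e, rfl⟩)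
        ?_ ?_
      · intro e' he'
        obtain ⟨-, hcc, htt, hii⟩ := Finset.mem_filter.mp he'
        simp only [dif_pos hcc]
        refine Finset.mem_erase.mpr ⟨?_, ?_⟩
        · intro hh
          have : e' = e := congrArg Subtype.val hh
          subst this
          omega
        · exact Finset.mem_filter.mpr ⟨Finset.mem_univ _, by
            rw [← keyT e' (C₀ e) hcc]; exact htt⟩
      · intro e₁ h₁ e₂ h₂ h12
        obtain ⟨-, hcc1, -, -⟩ := Finset.mem_filter.mp h₁
        obtain ⟨-, hcc2, -, -⟩ := Finset.mem_filter.mp h₂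
        simp only [dif_pos hcc1, dif_pos hcc2] at h12
        exact congrArg Subtype.val h12
    have h1 : 1 ≤ Sout.card := Finset.card_pos.mpr ⟨_, hmemSout⟩
    have h2 := Finset.card_erase_of_mem hmemSout
    have h3 := hf2 (t e)
    omega
  have hpinj : ∀ e e', C₀ e = C₀ e' → t e = t e' → p e = p e' → e = e' := by
    have key2 : ∀ a b, C₀ a = C₀ b → t a = t b → idx a < idx b → p a < p b := by
      intro a b hcab htab hab
      rw [hpdef]
      refine Finset.card_lt_card ?_
      rw [Finset.ssubset_iff_of_subset]
      · refine ⟨a, ?_, ?_⟩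
        · exact Finset.mem_filter.mpr ⟨Finset.mem_univ _, hcab, htab, hab⟩
        · intro hmem
          have := (Finset.mem_filter.mp hmem).2.2.2
          omega
      · intro x hx
        obtain ⟨-, h1, h2, h3⟩ := Finset.mem_filter.mp hx
        exact Finset.mem_filter.mpr ⟨Finset.mem_univ _,
          h1.trans hcab, h2.trans htab, by omega⟩
    intro e e' hc0 ht0 hp0
    rcases Nat.lt_trichotomy (idx e) (idx e') with hlt | heq | hgt
    · have := key2 e e' hc0 ht0 hlt
      omega
    · exact hidxinj e e' heq
    · have := key2 e' e hc0.symm ht0.symm hgt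
      omega
  -- Galvin setup
  set TL : E → V × ℕ := fun e => (t e, p e) with hTLdef
  set cc : E → ℕ := fun e => (C₀ e : ℕ) with hccdef
  have hpT : ∀ e e', TL e = TL e' → cc e = cc e' → e = e' := by
    intro e e' hTL hcc
    have hc0 : C₀ e = C₀ e' := Fin.ext hcc
    have hprod := Prod.ext_iff.mp hTL
    exact hpinj e e' hc0 hprod.1 hprod.2
  have hpH : ∀ e e', h e = h e' → cc e = cc e' → e = e' :=
    fun e e' hh hcc => hinH e e' (Fin.ext hcc) hh
  have hbound : ∀ e ∈ (Finset.univ : Finset E),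
      (Finset.univ.filter fun e' => Beats TL h cc e e').card < (L e).card := by
    intro e _
    have hcek : cc e < k := (C₀ e).is_lt
    have h1 : (Finset.univ.filter fun e' => Beats TL h cc e e').card ≤
        ((Finset.range k).erase (cc e)).card := by
      refine Finset.card_le_card_of_injOn cc ?_ ?_
      · intro e' he'
        have hb : (TL e' = TL e ∧ cc e' < cc e) ∨ (h e' = h e ∧ cc e < cc e') :=
          (Finset.mem_filter.mp he').2
        refine Finset.mem_erase.mpr ⟨?_, Finset.mem_range.mpr (C₀ e').is_lt⟩
        rcases hb with ⟨-, hlt⟩ | ⟨-, hlt⟩ <;> omega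
      · intro e₁ h₁ e₂ h₂ h12
        have hb₁ : (TL e₁ = TL e ∧ cc e₁ < cc e) ∨ (h e₁ = h e ∧ cc e < cc e₁) :=
          (Finset.mem_filter.mp h₁).2
        have hb₂ : (TL e₂ = TL e ∧ cc e₂ < cc e) ∨ (h e₂ = h e ∧ cc e < cc e₂) :=
          (Finset.mem_filter.mp h₂).2
        rcases hb₁ with ⟨hT1, hc1⟩ | ⟨hH1, hc1⟩ <;>
          rcases hb₂ with ⟨hT2, hc2⟩ | ⟨hH2, hc2⟩
        · exact hpT _ _ (hT1.trans hT2.symm) h12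
        · omega
        · omega
        · exact hpH _ _ (hH1.trans hH2.symm) h12
    have h2 : ((Finset.range k).erase (cc e)).card = k - 1 := by
      rw [Finset.card_erase_of_mem (Finset.mem_range.mpr hcek), Finset.card_range]
    have := hL e
    omega
  obtain ⟨C, hCmem, hCprop⟩ := galvin_main TL h cc hpT hpH Finset.univ L hbound
  refine ⟨C, fun e => hCmem e (Finset.mem_univ e), fun c => ?_⟩
  refine verif ends f hf2 _ t h p (fun e _ => hth e) ?_ (fun e _ => hpb e) ?_
  · intro e e' hce hce' hh
    by_contra hne
    exact hCprop e (Finset.mem_univ e) e' (Finset.mem_univ e') hne (Or.inr hh)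
      (hce.trans hce'.symm)
  · intro e e' hce hce' ht0 hp0
    by_contra hne
    refine hCprop e (Finset.mem_univ e) e' (Finset.mem_univ e') hne (Or.inl ?_)
      (hce.trans hce'.symm)
    rw [hTLdef]
    simp only [Prod.mk.injEq]
    exact ⟨ht0, hp0⟩

end Hard

section Final

variable {V E : Type} [Fintype V] [Fintype E] [DecidableEq V]

lemma class_transfer {P Q : E → Prop} [iP : Fintype {e // P e}] [iQ : Fintype {e // Q e}]
    (ends : E → Sym2 V) (f : V → ℕ) (hPQ : ∀ e, P e ↔ Q e)
    (h : IsPseudoforest (subEnds ends P) ∧ ∀ v, degree (subEnds ends P) v ≤ f v) :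
    IsPseudoforest (subEnds ends Q) ∧ ∀ v, degree (subEnds ends Q) v ≤ f v := by
  have hPQ' : P = Q := funext fun e => propext (hPQ e)
  subst hPQ'
  rwa [Subsingleton.elim iQ iP]

end Final

/-- for every multigraph `G` and `f` with `f(v) ≥ 2` everywhere, the
list degree-`f` pseudoarboricity equals the degree-`f` pseudoarboricity:
`pa_{f,ℓ}(G) = pa_f(G)`. -/
theorem pafList_eq_paf {V E : Type} [Fintype V] [Fintype E] [DecidableEq V]
    (ends : E → Sym2 V) (f : V → ℕ) (hf : ∀ v, 2 ≤ f v) :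
    pafList ends f = paf ends f := by
  classical
  obtain ⟨k₁, C₁, hC₁⟩ := exists_paf_coloring ends f hf
  have hS2ne : {k | ∃ C : E → Fin k, PafColoring ends f C}.Nonempty := ⟨k₁, C₁, hC₁⟩
  obtain ⟨C₀, hC₀⟩ : ∃ C : E → Fin (paf ends f), PafColoring ends f C :=
    Nat.sInf_mem hS2ne
  have hhard : paf ends f ∈ {k | ∀ L : E → Finset ℕ, (∀ e, k ≤ (L e).card) →
      ∃ C : E → ℕ, (∀ e, C e ∈ L e) ∧
        ∀ c : ℕ, IsPseudoforest (subEnds ends fun e => C e = c) ∧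
          ∀ v, degree (subEnds ends fun e => C e = c) v ≤ f v} := by
    intro L hL
    exact hard_direction ends f hf _ C₀ hC₀ L hL
  have h1 : pafList ends f ≤ paf ends f := Nat.sInf_le hhard
  have hS1ne : {k | ∀ L : E → Finset ℕ, (∀ e, k ≤ (L e).card) →
      ∃ C : E → ℕ, (∀ e, C e ∈ L e) ∧
        ∀ c : ℕ, IsPseudoforest (subEnds ends fun e => C e = c) ∧
          ∀ v, degree (subEnds ends fun e => C e = c) v ≤ f v}.Nonempty :=
    ⟨paf ends f, hhard⟩
  have hk0 := Nat.sInf_mem hS1ne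
  obtain ⟨C, hCmem, hCprop⟩ := hk0 (fun _ => Finset.range (pafList ends f))
    (fun e => le_of_eq (Finset.card_range _).symm)
  have h2 : paf ends f ≤ pafList ends f := by
    refine Nat.sInf_le ?_
    refine ⟨fun e => ⟨C e, Finset.mem_range.mp (hCmem e)⟩, fun c => ?_⟩
    refine class_transfer ends f (fun e => ?_) (hCprop (c : ℕ))
    constructor
    · intro hh
      exact Fin.ext hh
    · intro hh
      exact congrArg Fin.val hh
  omega

end MG
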